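/- Let B be the braid group of a finite Coxeter group W with generators S̄, and suppose α, β ∈ W each admit a unique reduced expression, these reduced expressions differ in their first letter, and ℓ(β⁻¹α) = ℓ(β) + ℓ(α). If additionally β̃⁻¹ᾱ = α̃⁻¹β̄ holds in W in the sense that β⁻¹α = α⁻¹β, and a Coxeter-diagram automorphism exchanging the first letters of α and β fixes c := β⁻¹α, then the lifted relation β̃ ᾱ = α̃ β̄ holds in the braid group B (where x̃ denotes the image of x̄ under the palindromic anti-automorphism). -/

import Mathlib

/-- Let `(W,S)` be a finite Coxeter system, `B` its braid group with
generators `gen`, canonical lift `lift : W → B` via reduced expressions, and `φ` the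
palindromic anti-automorphism of `B` fixing the generators. Suppose `α, β ∈ W` each admit
a unique reduced expression (`sα :: ωα'` resp. `sβ :: ωβ'`), these differ in their first
letter, `ℓ(β⁻¹α) = ℓ(β) + ℓ(α)`, the relation `β⁻¹α = α⁻¹β` holds in `W`, and a diagram
automorphism exchanging the first letters fixes `c := β⁻¹α`. Then the lifted relation
`β̃ ᾱ = α̃ β̄` holds in the braid group, where `x̃ = φ(lift x)`. -/
theorem stmt10 {B W S : Type*} [Group B] [Group W] [Finite W] {M : CoxeterMatrix S}
    (cs : CoxeterSystem M W) (gen : S → B) (lift : W → B)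
    (hlift : ∀ (w : W) (ω : List S),
      cs.wordProd ω = w → cs.IsReduced ω → lift w = (ω.map gen).prod)
    (hbraid : ∀ (ω ω' : List S), cs.wordProd ω = cs.wordProd ω' →
      cs.IsReduced ω → cs.IsReduced ω' → (ω.map gen).prod = (ω'.map gen).prod)
    (φ : B → B) (hφ : ∀ x y : B, φ (x * y) = φ y * φ x)
    (hφgen : ∀ s : S, φ (gen s) = gen s)
    (α β : W) (sα sβ : S) (ωα' ωβ' : List S)
    (hα : cs.wordProd (sα :: ωα') = α) (hαred : cs.IsReduced (sα :: ωα'))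
    (hαuniq : ∀ ω : List S, cs.wordProd ω = α → cs.IsReduced ω → ω = sα :: ωα')
    (hβ : cs.wordProd (sβ :: ωβ') = β) (hβred : cs.IsReduced (sβ :: ωβ'))
    (hβuniq : ∀ ω : List S, cs.wordProd ω = β → cs.IsReduced ω → ω = sβ :: ωβ')
    (hheads : sα ≠ sβ)
    (hlen : cs.length (β⁻¹ * α) = cs.length β + cs.length α)
    (hrel : β⁻¹ * α = α⁻¹ * β)
    (πW : W ≃* W) (e : S ≃ S)
    (hπ : ∀ s : S, πW (cs.simple s) = cs.simple (e s))
    (he1 : e sα = sβ) (he2 : e sβ = sα)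
    (hfix : πW (β⁻¹ * α) = β⁻¹ * α) :
    φ (lift β) * lift α = φ (lift α) * lift β := by
  set ωα := sα :: ωα' with hωα
  set ωβ := sβ :: ωβ' with hωβ
  -- φ on products of generators reverses the word
  have hφone : φ 1 = 1 := by
    have := hφ 1 1
    rw [one_mul] at this
    exact left_eq_mul.mp this
  have hφprod : ∀ l : List S, φ ((l.map gen).prod) = (l.reverse.map gen).prod := by
    intro l
    induction l with
    | nil => simpa using hφone
    | cons a t ih =>
      simp only [List.map_cons, List.prod_cons, List.reverse_cons, List.map_append,
        List.prod_append, hφ, ih, List.map_cons, List.map_nil, List.prod_cons,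
        List.prod_nil, mul_one, hφgen]
  -- the two reduced words for c = β⁻¹α
  have hlα : ωα.length = cs.length α := by rw [← hα]; exact hαred.symm
  have hlβ : ωβ.length = cs.length β := by rw [← hβ]; exact hβred.symm
  have hw1 : cs.wordProd (ωβ.reverse ++ ωα) = β⁻¹ * α := by
    rw [cs.wordProd_append, cs.wordProd_reverse, hα, hβ]
  have hw2 : cs.wordProd (ωα.reverse ++ ωβ) = β⁻¹ * α := by
    rw [cs.wordProd_append, cs.wordProd_reverse, hα, hβ, hrel]
  have hr1 : cs.IsReduced (ωβ.reverse ++ ωα) := by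
    unfold CoxeterSystem.IsReduced
    rw [hw1, List.length_append, List.length_reverse, hlα, hlβ, hlen]
  have hr2 : cs.IsReduced (ωα.reverse ++ ωβ) := by
    unfold CoxeterSystem.IsReduced
    rw [hw2, List.length_append, List.length_reverse, hlα, hlβ, hlen, Nat.add_comm]
  have key := hbraid (ωβ.reverse ++ ωα) (ωα.reverse ++ ωβ) (hw1.trans hw2.symm) hr1 hr2
  rw [List.map_append, List.prod_append, List.map_append, List.prod_append] at key
  rw [hlift α ωα hα hαred, hlift β ωβ hβ hβred, hφprod, hφprod]
  exact key
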